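/- Let f₁, …, f_s be simple tropical polynomials in n variables. Then the set Z(f₁) ∩ ⋯ ∩ Z(f_s) ⊆ ℝⁿ, the intersection of their corner loci, is additive, i.e., closed under the coordinatewise maximum: if u and v belong to every Z(f_i), then so does u ⊕ v. -/
import Mathlib


/-- A tropical polynomial in `n` variables: a finite nonempty set of exponent
vectors in `ℕⁿ` together with real coefficients. -/
structure TropPoly (n : ℕ) where
  supp : Finset (Fin n → ℕ)
  supp_nonempty : supp.Nonempty
  coeff : (Fin n → ℕ) → ℝ

namespace TropPoly

variable {n : ℕ}

/-- The value at `u` of the monomial of exponent `ω`. -/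
def mono (f : TropPoly n) (ω : Fin n → ℕ) (u : Fin n → ℝ) : ℝ :=
  (∑ i, (ω i : ℝ) * u i) + f.coeff ω

/-- The piecewise-linear convex function defined by a tropical polynomial:
`f(u) = max_{ω ∈ Ω} (⟨ω, u⟩ + A(ω))`. -/
def eval (f : TropPoly n) (u : Fin n → ℝ) : ℝ :=
  f.supp.sup' f.supp_nonempty (fun ω => f.mono ω u)

/-- The corner locus of a tropical polynomial: the set of points where the
maximum is attained by at least two distinct exponent vectors. -/
def Z (f : TropPoly n) : Set (Fin n → ℝ) :=
  {u | ∃ ω ∈ f.supp, ∃ τ ∈ f.supp, ω ≠ τ ∧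
    f.mono ω u = f.eval u ∧ f.mono τ u = f.eval u}

/-- A tropical polynomial is simple if every exponent vector has at most one
nonzero coordinate (i.e., all monomials are univariate or constant). -/
def Simple (f : TropPoly n) : Prop :=
  ∀ ω ∈ f.supp, ∀ i j : Fin n, ω i ≠ 0 → ω j ≠ 0 → i = j

end TropPoly

namespace TropPoly

variable {n : ℕ}

lemma mono_sup {f : TropPoly n} (hf : f.Simple) {ω : Fin n → ℕ} (hω : ω ∈ f.supp)
    (u v : Fin n → ℝ) : f.mono ω (u ⊔ v) = f.mono ω u ⊔ f.mono ω v := by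
  have key : ∑ i, (ω i : ℝ) * (u ⊔ v) i = (∑ i, (ω i : ℝ) * u i) ⊔ (∑ i, (ω i : ℝ) * v i) := by
    by_cases h : ∃ i, ω i ≠ 0
    · obtain ⟨i₀, hi₀⟩ := h
      have hz : ∀ j, j ≠ i₀ → ω j = 0 := fun j hj => by
        by_contra hj'; exact hj (hf ω hω j i₀ hj' hi₀)
      have hs : ∀ x : Fin n → ℝ, ∑ i, (ω i : ℝ) * x i = (ω i₀ : ℝ) * x i₀ := fun x =>
        Finset.sum_eq_single i₀ (fun b _ hb => by simp [hz b hb]) (by simp)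
      rw [hs, hs, hs, Pi.sup_apply]
      exact mul_max_of_nonneg _ _ (Nat.cast_nonneg _)
    · push_neg at h
      simp [h]
  unfold mono
  rw [key]
  exact (max_add_add_right (∑ i, (ω i : ℝ) * u i) (∑ i, (ω i : ℝ) * v i) (f.coeff ω)).symm

lemma eval_sup {f : TropPoly n} (hf : f.Simple) (u v : Fin n → ℝ) :
    f.eval (u ⊔ v) = f.eval u ⊔ f.eval v := by
  apply le_antisymm
  · apply Finset.sup'_le
    intro ω hω
    rw [mono_sup hf hω]
    exact sup_le_sup (Finset.le_sup' (fun ω => f.mono ω u) hω) (Finset.le_sup' (fun ω => f.mono ω v) hω)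
  · apply sup_le <;>
    · apply Finset.sup'_le
      intro ω hω
      refine le_trans ?_ (Finset.le_sup' (fun ω => f.mono ω (u ⊔ v)) hω)
      rw [mono_sup hf hω]
      first | exact le_sup_left | exact le_sup_right

lemma Z_sup {f : TropPoly n} (hf : f.Simple) {u v : Fin n → ℝ}
    (hu : u ∈ f.Z) (hv : v ∈ f.Z) : u ⊔ v ∈ f.Z := by
  have key : ∀ {w w' : Fin n → ℝ}, w ∈ f.Z → f.eval w' ≤ f.eval w →
      (w ⊔ w' ∈ f.Z ∧ w' ⊔ w ∈ f.Z) := by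
    intro w w' hw hle
    obtain ⟨ω, hω, τ, hτ, hne, h1, h2⟩ := hw
    have hev : f.eval (w ⊔ w') = f.eval w := by
      rw [eval_sup hf]; exact sup_eq_left.mpr hle
    have hm : ∀ σ ∈ f.supp, f.mono σ w = f.eval w → f.mono σ (w ⊔ w') = f.eval (w ⊔ w') := by
      intro σ hσ hσe
      rw [mono_sup hf hσ, hev, hσe]
      exact sup_eq_left.mpr (le_trans (Finset.le_sup' (fun σ => f.mono σ w') hσ) hle)
    have hsc : w' ⊔ w = w ⊔ w' := sup_comm w' w
    constructor
    · exact ⟨ω, hω, τ, hτ, hne, hm ω hω h1, hm τ hτ h2⟩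
    · rw [hsc]
      exact ⟨ω, hω, τ, hτ, hne, hm ω hω h1, hm τ hτ h2⟩
  rcases le_total (f.eval v) (f.eval u) with h | h
  · exact (key hu h).1
  · exact (key hv h).2

end TropPoly

/-- The intersection of the corner loci of finitely many simple tropical
polynomials is closed under coordinatewise maximum. -/
theorem TropPoly.inter_Z_additive_of_simple {n s : ℕ} (f : Fin s → TropPoly n)
    (hf : ∀ i, (f i).Simple) (u v : Fin n → ℝ)
    (hu : ∀ i, u ∈ (f i).Z) (hv : ∀ i, v ∈ (f i).Z) :
    ∀ i, u ⊔ v ∈ (f i).Z := by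
  exact fun i => TropPoly.Z_sup (hf i) (hu i) (hv i)
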